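/- Let λ1, λ2, μ1, μ2 > 0 with μ1 > λ1(1+λ2/μ2). Let 0 < l1 < l2 < 1 be the roots of p(l) = l² − l(a1+a5−1) + a3a5 with a1 = 1 + (λ1+λ2)/μ1 − μ2λ2/(μ1(μ2+λ1)), a3 = λ1/μ1, a4 = λ2/(μ2+λ1), a5 = λ1/(μ2+λ1). Define vectors e_j = (l_j(l_j−a5), l_j a4, l_j−a5, a4) for j = 1,2 and α2 = 1/(l2−l1) = −α1. Then for every i ≥ 1, all four components of α2 l2^i e_2 + α1 l1^i e_1 are strictly positive. -/
import Mathlib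


theorem stmt_16 (l1 l2 m1 m2 : ℝ) (hl1 : 0 < l1) (hl2 : 0 < l2)
    (hm1 : 0 < m1) (hm2 : 0 < m2) (hstab : m1 > l1 * (1 + l2 / m2))
    (a1 a3 a4 a5 : ℝ)
    (ha1 : a1 = 1 + (l1 + l2) / m1 - m2 * l2 / (m1 * (m2 + l1)))
    (ha3 : a3 = l1 / m1) (ha4 : a4 = l2 / (m2 + l1)) (ha5 : a5 = l1 / (m2 + l1))
    (r1 r2 : ℝ)
    (hroot1 : r1 ^ 2 - r1 * (a1 + a5 - 1) + a3 * a5 = 0)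
    (hroot2 : r2 ^ 2 - r2 * (a1 + a5 - 1) + a3 * a5 = 0)
    (h0 : 0 < r1) (h12 : r1 < r2) (h21 : r2 < 1)
    (α1 α2 : ℝ) (hα2 : α2 = 1 / (r2 - r1)) (hα1 : α1 = -α2)
    (e1 e2 : Fin 4 → ℝ)
    (he1 : e1 = ![r1 * (r1 - a5), r1 * a4, r1 - a5, a4])
    (he2 : e2 = ![r2 * (r2 - a5), r2 * a4, r2 - a5, a4]) :
    ∀ i : ℕ, 1 ≤ i → ∀ k : Fin 4,
      0 < α2 * r2 ^ i * e2 k + α1 * r1 ^ i * e1 k := by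
  have hm2l1 : 0 < m2 + l1 := by linarith
  have ha4pos : 0 < a4 := by rw [ha4]; positivity
  have ha5pos : 0 < a5 := by rw [ha5]; positivity
  have hne : r1 - r2 ≠ 0 := by intro h; have := sub_eq_zero.mp h; linarith
  have hsum : r1 + r2 = a1 + a5 - 1 := by
    have h : (r1 - r2) * (r1 + r2 - (a1 + a5 - 1)) = 0 := by linear_combination hroot1 - hroot2
    rcases mul_eq_zero.mp h with h | h
    · exact absurd h hne
    · linarith
  have hprod : r1 * r2 = a3 * a5 := by linear_combination r1 * hsum - hroot1
  have h13 : a1 - a3 - 1 = l2 * l1 / (m1 * (m2 + l1)) := by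
    rw [ha1, ha3]; field_simp; ring
  have h13' : a3 + 1 < a1 := by
    have : 0 < l2 * l1 / (m1 * (m2 + l1)) := by positivity
    linarith
  have hkey : (r1 - a5) * (r2 - a5) < 0 := by
    have h : (r1 - a5) * (r2 - a5) = a5 * (a3 - a1 + 1) := by
      linear_combination hprod - a5 * hsum
    rw [h]
    exact mul_neg_of_pos_of_neg ha5pos (by linarith)
  have hr1a5 : r1 < a5 := by
    by_contra h
    push_neg at h
    nlinarith
  have hr2a5 : a5 < r2 := by
    by_contra h
    push_neg at h
    nlinarith
  have hα2pos : 0 < α2 := by rw [hα2]; exact one_div_pos.mpr (sub_pos.mpr h12)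
  intro i hi k
  have hpow : r1 ^ i < r2 ^ i := pow_lt_pow_left₀ h12 h0.le (by omega)
  have hp1 : 0 < r1 ^ i := pow_pos h0 i
  have hp2 : 0 < r2 ^ i := pow_pos (h0.trans h12) i
  have hr2pos : 0 < r2 := h0.trans h12
  subst he1 he2 hα1
  fin_cases k <;> simp
  · have A : 0 < α2 * r2 ^ i * (r2 * (r2 - a5)) :=
      mul_pos (mul_pos hα2pos hp2) (mul_pos hr2pos (by linarith))
    have B : α2 * r1 ^ i * (r1 * (r1 - a5)) < 0 :=
      mul_neg_of_pos_of_neg (mul_pos hα2pos hp1) (mul_neg_of_pos_of_neg h0 (by linarith))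
    linarith
  · have h1 : r1 ^ i * r1 < r2 ^ i * r2 :=
      (mul_lt_mul_of_pos_right hpow h0).trans (mul_lt_mul_of_pos_left h12 hp2)
    have key : 0 < α2 * r2 ^ i * (r2 * a4) - α2 * r1 ^ i * (r1 * a4) := by
      have h : α2 * r2 ^ i * (r2 * a4) - α2 * r1 ^ i * (r1 * a4)
          = (α2 * a4) * (r2 ^ i * r2 - r1 ^ i * r1) := by ring
      rw [h]; exact mul_pos (mul_pos hα2pos ha4pos) (by linarith)
    linarith
  · have A : 0 < α2 * r2 ^ i * (r2 - a5) :=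
      mul_pos (mul_pos hα2pos hp2) (by linarith)
    have B : α2 * r1 ^ i * (r1 - a5) < 0 :=
      mul_neg_of_pos_of_neg (mul_pos hα2pos hp1) (by linarith)
    linarith
  · have key : 0 < α2 * r2 ^ i * a4 - α2 * r1 ^ i * a4 := by
      have h : α2 * r2 ^ i * a4 - α2 * r1 ^ i * a4 = (α2 * a4) * (r2 ^ i - r1 ^ i) := by ring
      rw [h]; exact mul_pos (mul_pos hα2pos ha4pos) (by linarith)
    linarith
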